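/- For even n ≥ 4, let M_s = −Σ_{j=0}^{n/2−1}(E_{2j+1,2j+2} − E_{2j+2,2j+1}) and M_n = Σ_{j=1}^{n−2} E_{j,j+2} in M(n,ℝ). Then M_s and M_n commute, M_s² = −I_n, M_n^{n/2} = 0, and M_s and M_n are respectively the semisimple and nilpotent parts of M_{0,1} := M_s + M_n; moreover both M_s and M_n are polynomials in M_{0,1}, so ℝ[M_{0,1}] = ℝ[M_s, M_n]. The matrix M_{0,1} is nonderogatory with characteristic polynomial (X²+1)^{n/2}. -/

import Mathlib

open Matrix Polynomial

namespace Stmt18Aux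

def msMat (n : ℕ) : Matrix (Fin n) (Fin n) ℝ :=
  Matrix.of (fun i j : Fin n =>
    if (j : ℕ) = (i : ℕ) + 1 ∧ Even (i : ℕ) then (-1 : ℝ)
    else if (i : ℕ) = (j : ℕ) + 1 ∧ Even (j : ℕ) then 1 else 0)

def mnMat (n : ℕ) : Matrix (Fin n) (Fin n) ℝ :=
  Matrix.of (fun i j : Fin n => if (j : ℕ) = (i : ℕ) + 2 then (1 : ℝ) else 0)

variable {n : ℕ}

lemma even_lt (hev : Even n) {i : ℕ} (hi : i < n) (h : i % 2 = 0) : i + 1 < n := by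
  obtain ⟨m, rfl⟩ := hev; omega

lemma fin_sum_ite (c : ℕ) (hc : c < n) (f : Fin n → ℝ) :
    (∑ k : Fin n, if (k : ℕ) = c then f k else 0) = f ⟨c, hc⟩ := by
  rw [Finset.sum_eq_single (⟨c, hc⟩ : Fin n)]
  · simp
  · intro b _ hb
    exact if_neg fun h => hb (Fin.ext h)
  · intro h; exact absurd (Finset.mem_univ _) h

lemma mn_mul (A : Matrix (Fin n) (Fin n) ℝ) (i j : Fin n) :
    (mnMat n * A) i j = if h : (i : ℕ) + 2 < n then A ⟨(i : ℕ) + 2, h⟩ j else 0 := by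
  rw [Matrix.mul_apply]
  split_ifs with h
  · exact (Finset.sum_congr rfl fun k _ => by
      by_cases hk : (k : ℕ) = (i : ℕ) + 2 <;> simp [mnMat, hk]).trans
      (fin_sum_ite _ h fun k => A k j)
  · refine Finset.sum_eq_zero fun k _ => ?_
    have hk : ¬((k : ℕ) = (i : ℕ) + 2) := by have := k.isLt; omega
    simp [mnMat, hk]

lemma mul_mn (A : Matrix (Fin n) (Fin n) ℝ) (i j : Fin n) :
    (A * mnMat n) i j =
      if h : 2 ≤ (j : ℕ) then A i ⟨(j : ℕ) - 2, by have := j.isLt; omega⟩ else 0 := by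
  rw [Matrix.mul_apply]
  split_ifs with h
  · refine (Finset.sum_congr rfl fun k _ => ?_).trans
      (fin_sum_ite ((j : ℕ) - 2) (by have := j.isLt; omega) fun k => A i k)
    simp only [mnMat, Matrix.of_apply]
    by_cases hk : (k : ℕ) = (j : ℕ) - 2
    · rw [if_pos (show (j : ℕ) = (k : ℕ) + 2 by omega), if_pos hk, mul_one]
    · rw [if_neg (show (j : ℕ) ≠ (k : ℕ) + 2 by omega), if_neg hk, mul_zero]
  · refine Finset.sum_eq_zero fun k _ => ?_
    have hj : (j : ℕ) ≠ (k : ℕ) + 2 := by omega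
    simp [mnMat, hj]

lemma ms_mul (hev : Even n) (A : Matrix (Fin n) (Fin n) ℝ) (i j : Fin n) :
    (msMat n * A) i j =
      if h : (i : ℕ) % 2 = 0 then -(A ⟨(i : ℕ) + 1, even_lt hev i.isLt h⟩ j)
      else A ⟨(i : ℕ) - 1, by have := i.isLt; omega⟩ j := by
  rw [Matrix.mul_apply]
  split_ifs with h
  · refine (Finset.sum_congr rfl fun k _ => ?_).trans
      (fin_sum_ite _ (even_lt hev i.isLt h) fun k => -(A k j))
    simp only [msMat, Matrix.of_apply, Nat.even_iff]
    by_cases hk : (k : ℕ) = (i : ℕ) + 1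
    · rw [if_pos ⟨hk, h⟩, if_pos hk]; ring
    · rw [if_neg (fun hc => hk hc.1), if_neg (fun hc => by omega), if_neg hk, zero_mul]
  · refine (Finset.sum_congr rfl fun k _ => ?_).trans
      (fin_sum_ite ((i : ℕ) - 1) (by have := i.isLt; omega) fun k => A k j)
    simp only [msMat, Matrix.of_apply, Nat.even_iff]
    by_cases hk : (k : ℕ) = (i : ℕ) - 1
    · have hi1 : (i : ℕ) = (k : ℕ) + 1 := by omega
      have hke : (k : ℕ) % 2 = 0 := by omega
      rw [if_neg (fun hc => by omega), if_pos ⟨hi1, hke⟩, if_pos hk, one_mul]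
    · rw [if_neg (fun hc => by omega), if_neg (fun hc => by omega), if_neg hk, zero_mul]

lemma mul_ms (hev : Even n) (A : Matrix (Fin n) (Fin n) ℝ) (i j : Fin n) :
    (A * msMat n) i j =
      if h : (j : ℕ) % 2 = 0 then A i ⟨(j : ℕ) + 1, even_lt hev j.isLt h⟩
      else -(A i ⟨(j : ℕ) - 1, by have := j.isLt; omega⟩) := by
  rw [Matrix.mul_apply]
  split_ifs with h
  · refine (Finset.sum_congr rfl fun k _ => ?_).trans
      (fin_sum_ite _ (even_lt hev j.isLt h) fun k => A i k)
    simp only [msMat, Matrix.of_apply, Nat.even_iff]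
    by_cases hk : (k : ℕ) = (j : ℕ) + 1
    · rw [if_neg (fun hc => by omega), if_pos ⟨hk, h⟩, if_pos hk, mul_one]
    · rw [if_neg (fun hc => by omega), if_neg (fun hc => hk hc.1), if_neg hk, mul_zero]
  · refine (Finset.sum_congr rfl fun k _ => ?_).trans
      (fin_sum_ite ((j : ℕ) - 1) (by have := j.isLt; omega) fun k => -(A i k))
    simp only [msMat, Matrix.of_apply, Nat.even_iff]
    by_cases hk : (k : ℕ) = (j : ℕ) - 1
    · have hj1 : (j : ℕ) = (k : ℕ) + 1 := by omega
      have hke : (k : ℕ) % 2 = 0 := by omega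
      rw [if_pos ⟨hj1, hke⟩, if_pos hk]; ring
    · rw [if_neg (fun hc => by omega), if_neg (fun hc => by omega), if_neg hk, mul_zero]


lemma ms_comm_mn (hev : Even n) : msMat n * mnMat n = mnMat n * msMat n := by
  ext i j
  rw [ms_mul hev, mn_mul]
  have hi := i.isLt; have hj := j.isLt
  have hn2 := Nat.even_iff.mp hev
  simp only [msMat, mnMat, Matrix.of_apply, Nat.even_iff]
  split_ifs <;> first | rfl | (exfalso; omega) | norm_num

lemma ms_sq (hev : Even n) : msMat n ^ 2 = -1 := by
  ext i j
  rw [pow_two, ms_mul hev]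
  have hi := i.isLt; have hj := j.isLt
  have hn2 := Nat.even_iff.mp hev
  simp only [msMat, Matrix.of_apply, Nat.even_iff, Matrix.neg_apply, Matrix.one_apply,
    Fin.ext_iff]
  split_ifs <;> first | rfl | (exfalso; omega) | norm_num

lemma mn_pow (k : ℕ) : mnMat n ^ k =
    Matrix.of (fun i j : Fin n => if (j : ℕ) = (i : ℕ) + 2 * k then (1 : ℝ) else 0) := by
  induction k with
  | zero =>
    ext i j
    simp only [pow_zero, Matrix.one_apply, Matrix.of_apply, Fin.ext_iff, Nat.mul_zero,
      Nat.add_zero]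
    split_ifs <;> first | rfl | (exfalso; omega)
  | succ k ih =>
    ext i j
    rw [pow_succ', ih, mn_mul]
    have hi := i.isLt; have hj := j.isLt
    simp only [Matrix.of_apply]
    split_ifs <;> first | rfl | (exfalso; omega) | norm_num

lemma mn_pow_half (hev : Even n) : mnMat n ^ (n / 2) = 0 := by
  have hn2 := Nat.even_iff.mp hev
  ext i j
  rw [mn_pow]
  have hi := i.isLt; have hj := j.isLt
  simp only [Matrix.of_apply, Matrix.zero_apply]
  rw [if_neg (by omega)]

lemma mn_pow_half_pred (hn : 4 ≤ n) (hev : Even n) : mnMat n ^ (n / 2 - 1) ≠ 0 := by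
  have hn2 := Nat.even_iff.mp hev
  intro h
  have := congrFun (congrFun h ⟨0, by omega⟩) ⟨n - 2, by omega⟩
  rw [mn_pow] at this
  simp only [Matrix.of_apply, Matrix.zero_apply] at this
  rw [if_pos (by omega)] at this
  exact one_ne_zero this



lemma inv_sqrt {A : Type*} [CommRing A] [Algebra ℝ A] :
    ∀ m : ℕ, ∀ u : A, u ^ (2 ^ m) = 0 →
      ∃ g v : A, g ^ 2 * (1 - u) = 1 ∧ g = 1 + u * v := by
  intro m
  induction m with
  | zero =>
    intro u hu
    rw [pow_zero, pow_one] at hu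
    exact ⟨1, 0, by rw [hu]; ring, by rw [hu]; ring⟩
  | succ m ih =>
    intro u hu
    set c : A := algebraMap ℝ A (1/2) with hc_def
    have hc : (2 : A) * c = 1 := by
      rw [hc_def, ← map_ofNat (algebraMap ℝ A) 2, ← _root_.map_mul, ← _root_.map_one (algebraMap ℝ A)]
      norm_num
    have he : (1 - u) * (1 + c * u) ^ 2 = 1 - c ^ 2 * (u ^ 2 * (3 + u)) := by
      linear_combination (u + 2 * c * u ^ 2) * hc
    have he1 : (c ^ 2 * (u ^ 2 * (3 + u))) ^ (2 ^ m) = 0 := by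
      have h1 : (c ^ 2 * (u ^ 2 * (3 + u))) ^ (2 ^ m)
          = (c ^ 2 * (3 + u)) ^ (2 ^ m) * (u ^ 2) ^ (2 ^ m) := by
        rw [← mul_pow]; ring_nf
      rw [h1, ← pow_mul, show 2 * 2 ^ m = 2 ^ (m + 1) from (pow_succ' 2 m).symm, hu,
        mul_zero]
    obtain ⟨g', v', hg', hgv⟩ := ih _ he1
    refine ⟨g' * (1 + c * u), c + (c ^ 2 * (u * (3 + u))) * v' * (1 + c * u), ?_, ?_⟩
    · have hx : (g' * (1 + c * u)) ^ 2 * (1 - u)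
          = g' ^ 2 * ((1 - u) * (1 + c * u) ^ 2) := by ring
      rw [hx, he, hg']
    · rw [hgv]; ring


theorem stmt18 {n : ℕ} (hn : 4 ≤ n) (hev : Even n)
    (Ms Mn : Matrix (Fin n) (Fin n) ℝ)
    (hMs : Ms = Matrix.of (fun i j : Fin n =>
      if (j : ℕ) = (i : ℕ) + 1 ∧ Even (i : ℕ) then (-1 : ℝ)
      else if (i : ℕ) = (j : ℕ) + 1 ∧ Even (j : ℕ) then 1 else 0))
    (hMn : Mn = Matrix.of (fun i j : Fin n =>
      if (j : ℕ) = (i : ℕ) + 2 then (1 : ℝ) else 0)) :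
    Ms * Mn = Mn * Ms ∧
    Ms ^ 2 = -1 ∧
    Mn ^ (n / 2) = 0 ∧
    Module.End.IsSemisimple (Matrix.mulVecLin Ms) ∧
    IsNilpotent Mn ∧
    Ms ∈ Algebra.adjoin ℝ ({Ms + Mn} : Set (Matrix (Fin n) (Fin n) ℝ)) ∧
    Mn ∈ Algebra.adjoin ℝ ({Ms + Mn} : Set (Matrix (Fin n) (Fin n) ℝ)) ∧
    Algebra.adjoin ℝ ({Ms + Mn} : Set (Matrix (Fin n) (Fin n) ℝ))
      = Algebra.adjoin ℝ ({Ms, Mn} : Set (Matrix (Fin n) (Fin n) ℝ)) ∧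
    (Ms + Mn).charpoly = (X ^ 2 + 1) ^ (n / 2) ∧
    minpoly ℝ (Ms + Mn) = (Ms + Mn).charpoly := by
  have hMs' : Ms = msMat n := hMs
  have hMn' : Mn = mnMat n := hMn
  have hcomm : Ms * Mn = Mn * Ms := by rw [hMs', hMn']; exact ms_comm_mn hev
  have hcommC : Commute Ms Mn := hcomm
  have hsq : Ms ^ 2 = -1 := by rw [hMs']; exact ms_sq hev
  have hnp : Mn ^ (n / 2) = 0 := by rw [hMn']; exact mn_pow_half hev
  have hMsMs : Ms * Ms = -1 := by rw [← pow_two]; exact hsq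
  have hMMs : Commute (Ms + Mn) Ms := (Commute.refl Ms).add_left hcommC.symm
  have hMMn : Commute (Ms + Mn) Mn := hcommC.add_left (Commute.refl Mn)
  -- u = M² + 1 = Mn * (2 Ms + Mn)
  have hu_eq : (Ms + Mn) ^ 2 + 1 = Mn * ((2:ℝ) • Ms + Mn) := by
    have expand : (Ms + Mn) ^ 2 + 1 = Ms * Ms + Ms * Mn + Mn * Ms + Mn * Mn + 1 := by
      noncomm_ring
    have rhs : Mn * ((2:ℝ) • Ms + Mn) = (2:ℝ) • (Mn * Ms) + Mn * Mn := by
      rw [mul_add, mul_smul_comm]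
    rw [expand, rhs, hMsMs, hcommC.eq, two_smul]
    abel
  have h2inv : ((2:ℝ) • Ms) * ((-(2:ℝ)⁻¹) • Ms) = 1 := by
    rw [smul_mul_assoc, mul_smul_comm, smul_smul, hMsMs,
      show ((2:ℝ) * -(2:ℝ)⁻¹) = -1 by norm_num, neg_smul, one_smul, neg_neg]
  have h2inv' : ((-(2:ℝ)⁻¹) • Ms) * ((2:ℝ) • Ms) = 1 := by
    rw [smul_mul_assoc, mul_smul_comm, smul_smul, hMsMs,
      show ((-(2:ℝ)⁻¹) * 2) = -1 by norm_num, neg_smul, one_smul, neg_neg]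
  have hUnit2Ms : IsUnit ((2:ℝ) • Ms) := ⟨⟨(2:ℝ) • Ms, (-(2:ℝ)⁻¹) • Ms, h2inv, h2inv'⟩, rfl⟩
  have hMnNil : IsNilpotent Mn := ⟨n / 2, hnp⟩
  have hcw : Commute Mn ((2:ℝ) • Ms) := (hcommC.symm).smul_right 2
  have hWunit : IsUnit ((2:ℝ) • Ms + Mn) :=
    hMnNil.isUnit_add_left_of_commute hUnit2Ms hcw
  have hcommW : Commute Mn ((2:ℝ) • Ms + Mn) := hcw.add_right (Commute.refl Mn)
  have huN : ((Ms + Mn) ^ 2 + 1) ^ (n / 2) = 0 := by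
    rw [hu_eq, hcommW.mul_pow, hnp, zero_mul]
  have huNpred : ((Ms + Mn) ^ 2 + 1) ^ (n / 2 - 1) ≠ 0 := by
    rw [hu_eq, hcommW.mul_pow]
    intro h
    obtain ⟨w, hw⟩ := hWunit.pow (n / 2 - 1)
    rw [← hw] at h
    have hzero : Mn ^ (n / 2 - 1) = 0 := by
      have h6 := Units.mul_inv_cancel_right (Mn ^ (n / 2 - 1)) w
      rw [h, zero_mul] at h6
      exact h6.symm
    rw [hMn'] at hzero
    exact mn_pow_half_pred hn hev hzero
  have huPow : ((Ms + Mn) ^ 2 + 1) ^ (2 ^ (n / 2)) = 0 := by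
    have hle : n / 2 ≤ 2 ^ (n / 2) := Nat.le_of_lt Nat.lt_two_pow_self
    rw [show 2 ^ (n / 2) = n / 2 + (2 ^ (n / 2) - n / 2) from (Nat.add_sub_cancel' hle).symm,
      pow_add, huN, zero_mul]
  -- the adjoin subalgebra
  have hMmem : Ms + Mn ∈ Algebra.adjoin ℝ ({Ms + Mn} : Set (Matrix (Fin n) (Fin n) ℝ)) :=
    Algebra.self_mem_adjoin_singleton ℝ _
  have humem : (Ms + Mn) ^ 2 + 1 ∈ Algebra.adjoin ℝ ({Ms + Mn} : Set (Matrix (Fin n) (Fin n) ℝ)) :=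
    add_mem (pow_mem hMmem 2) (one_mem _)
  letI : CommRing (Algebra.adjoin ℝ ({Ms + Mn} : Set (Matrix (Fin n) (Fin n) ℝ))) :=
    Algebra.adjoinCommRingOfComm ℝ (fun a ha b hb => by
      rw [Set.mem_singleton_iff] at ha hb; rw [ha, hb])
  obtain ⟨g, v, hg, hgv⟩ := inv_sqrt (n / 2)
    (⟨(Ms + Mn) ^ 2 + 1, humem⟩ :
      Algebra.adjoin ℝ ({Ms + Mn} : Set (Matrix (Fin n) (Fin n) ℝ)))
    (by apply Subtype.ext; simpa using huPow)
  have hgM : (g : Matrix (Fin n) (Fin n) ℝ) ^ 2 * (1 - ((Ms + Mn) ^ 2 + 1)) = 1 := by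
    simpa using congrArg Subtype.val hg
  have hgvM : (g : Matrix (Fin n) (Fin n) ℝ)
      = 1 + ((Ms + Mn) ^ 2 + 1) * (v : Matrix (Fin n) (Fin n) ℝ) := by
    simpa using congrArg Subtype.val hgv
  set t := (Ms + Mn) * (g : Matrix (Fin n) (Fin n) ℝ) with ht_def
  have hMG : Commute (Ms + Mn) (g : Matrix (Fin n) (Fin n) ℝ) :=
    Algebra.commute_of_mem_adjoin_self g.2
  have htmem : t ∈ Algebra.adjoin ℝ ({Ms + Mn} : Set (Matrix (Fin n) (Fin n) ℝ)) :=
    mul_mem hMmem g.2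
  have hcGu2 : Commute ((g : Matrix (Fin n) (Fin n) ℝ) ^ 2) ((Ms + Mn) ^ 2 + 1) :=
    (hMG.symm.pow_pow 2 2).add_right (Commute.one_right _)
  have hkey : (Ms + Mn) ^ 2 * (g : Matrix (Fin n) (Fin n) ℝ) ^ 2 = -1 := by
    calc (Ms + Mn) ^ 2 * (g : Matrix (Fin n) (Fin n) ℝ) ^ 2
        = ((Ms + Mn) ^ 2 + 1) * (g : Matrix (Fin n) (Fin n) ℝ) ^ 2
          - (g : Matrix (Fin n) (Fin n) ℝ) ^ 2 := by rw [add_mul, one_mul]; abel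
      _ = (g : Matrix (Fin n) (Fin n) ℝ) ^ 2 * ((Ms + Mn) ^ 2 + 1)
          - (g : Matrix (Fin n) (Fin n) ℝ) ^ 2 := by rw [← hcGu2.eq]
      _ = -((g : Matrix (Fin n) (Fin n) ℝ) ^ 2 * (1 - ((Ms + Mn) ^ 2 + 1))) := by
          rw [mul_sub, mul_one]; abel
      _ = -1 := by rw [hgM]
  have ht2 : t ^ 2 = -1 := by rw [ht_def, hMG.mul_pow, hkey]
  have hMst : Commute Ms t :=
    Algebra.commute_of_mem_adjoin_singleton_of_commute htmem hMMs.symm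
  have hSab : ∀ x ∈ Algebra.adjoin ℝ ({Ms + Mn} : Set (Matrix (Fin n) (Fin n) ℝ)),
      ∀ y ∈ Algebra.adjoin ℝ ({Ms + Mn} : Set (Matrix (Fin n) (Fin n) ℝ)), Commute x y :=
    fun x hx y hy => by
      have h := mul_comm (⟨x, hx⟩ : Algebra.adjoin ℝ ({Ms + Mn} : Set (Matrix (Fin n) (Fin n) ℝ)))
        ⟨y, hy⟩
      simpa [Commute, SemiconjBy] using Subtype.ext_iff.mp h
  have htM_nil : IsNilpotent (t - (Ms + Mn)) := by
    have h1 : t - (Ms + Mn)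
        = (Ms + Mn) * (((Ms + Mn) ^ 2 + 1) * (v : Matrix (Fin n) (Fin n) ℝ)) := by
      rw [ht_def, hgvM, mul_add, mul_one, add_sub_cancel_left]
    have hxy : (Ms + Mn) * (((Ms + Mn) ^ 2 + 1) * (v : Matrix (Fin n) (Fin n) ℝ))
        = ((Ms + Mn) * (v : Matrix (Fin n) (Fin n) ℝ)) * ((Ms + Mn) ^ 2 + 1) := by
      rw [(hSab _ humem _ v.2).eq, ← mul_assoc]
    rw [h1, hxy]
    exact Commute.isNilpotent_mul_left
      (hSab _ (mul_mem hMmem v.2) _ humem) ⟨n / 2, huN⟩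
  have htMs_nil : IsNilpotent (t - Ms) := by
    have h7 : t - Ms = (t - (Ms + Mn)) + Mn := by abel
    rw [h7]
    refine Commute.isNilpotent_add ?_ htM_nil ⟨n / 2, hnp⟩
    exact (Algebra.commute_of_mem_adjoin_singleton_of_commute
      (sub_mem htmem hMmem) hMMn.symm).symm
  have hMsd : Commute Ms (t - Ms) := hMst.sub_right (Commute.refl Ms)
  have htt : t * t = -1 := by rw [← pow_two]; exact ht2
  have h0 : (t - Ms) * (t + Ms) = 0 := by
    rw [sub_mul, mul_add, mul_add, hMst.eq, htt, hMsMs]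
    abel
  have h2 : (t - Ms) * (t - Ms) = (-2:ℝ) • ((t - Ms) * Ms) := by
    have h1 : (t - Ms) * t = -((t - Ms) * Ms) := by
      have h8 := h0; rw [mul_add] at h8
      exact eq_neg_of_add_eq_zero_left h8
    rw [mul_sub, h1, neg_smul, two_smul]
    abel
  have h3 : (t - Ms) * (t - Ms) * (t - Ms) = (-4:ℝ) • (t - Ms) := by
    calc (t - Ms) * (t - Ms) * (t - Ms) = (t - Ms) * ((t - Ms) * (t - Ms)) := by
          rw [mul_assoc]
      _ = (t - Ms) * ((-2:ℝ) • ((t - Ms) * Ms)) := by rw [h2]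
      _ = (-2:ℝ) • ((t - Ms) * ((t - Ms) * Ms)) := by rw [mul_smul_comm]
      _ = (-2:ℝ) • (((t - Ms) * (t - Ms)) * Ms) := by rw [mul_assoc]
      _ = (-2:ℝ) • (((-2:ℝ) • ((t - Ms) * Ms)) * Ms) := by rw [h2]
      _ = ((-2:ℝ) * (-2:ℝ)) • ((t - Ms) * Ms * Ms) := by rw [smul_mul_assoc, smul_smul]
      _ = (4:ℝ) • ((t - Ms) * (Ms * Ms)) := by norm_num [mul_assoc]
      _ = (-4:ℝ) • (t - Ms) := by rw [hMsMs, mul_neg, mul_one, smul_neg, ← neg_smul]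
  have hdpow : ∀ j, (t - Ms) ^ (2 * j + 1) = ((-4:ℝ) ^ j) • (t - Ms) := by
    intro j; induction j with
    | zero => simp
    | succ j ih =>
      rw [show 2 * (j + 1) + 1 = (2 * j + 1) + 2 by ring, pow_add, ih, pow_two,
        smul_mul_assoc, ← mul_assoc, h3, smul_smul, ← pow_succ]
  obtain ⟨k, hk⟩ := htMs_nil
  have hzero : ((-4:ℝ) ^ k) • (t - Ms) = 0 := by
    rw [← hdpow k, show 2 * k + 1 = k + (k + 1) by ring, pow_add, hk, zero_mul]
  have htMs : Ms = t := by
    have h4 : ((-4:ℝ) ^ k) ≠ 0 := pow_ne_zero _ (by norm_num)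
    exact (sub_eq_zero.mp ((smul_eq_zero.mp hzero).resolve_left h4)).symm
  have hMs_mem : Ms ∈ Algebra.adjoin ℝ ({Ms + Mn} : Set (Matrix (Fin n) (Fin n) ℝ)) := by
    have h12 := htmem; rwa [← htMs] at h12
  have hMn_mem : Mn ∈ Algebra.adjoin ℝ ({Ms + Mn} : Set (Matrix (Fin n) (Fin n) ℝ)) := by
    have h13 := sub_mem hMmem hMs_mem
    rwa [show Ms + Mn - Ms = Mn by abel] at h13
  have hadj : Algebra.adjoin ℝ ({Ms + Mn} : Set (Matrix (Fin n) (Fin n) ℝ))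
      = Algebra.adjoin ℝ ({Ms, Mn} : Set (Matrix (Fin n) (Fin n) ℝ)) := by
    apply le_antisymm
    · apply Algebra.adjoin_le
      rintro x hx
      rw [Set.mem_singleton_iff] at hx; subst hx
      exact add_mem (Algebra.subset_adjoin (by simp)) (Algebra.subset_adjoin (by simp))
    · apply Algebra.adjoin_le
      rintro x hx
      simp only [Set.mem_insert_iff, Set.mem_singleton_iff] at hx
      rcases hx with rfl | rfl
      exacts [hMs_mem, hMn_mem]
  -- charpoly and minpoly
  have hmono : ((X : ℝ[X]) ^ 2 + 1).Monic := by
    simpa using monic_X_pow_add_C (R := ℝ) (1 : ℝ) (by norm_num : (2:ℕ) ≠ 0)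
  have hdeg2 : ((X : ℝ[X]) ^ 2 + 1).natDegree = 2 := by
    compute_degree!
  have hirr : Irreducible ((X : ℝ[X]) ^ 2 + 1) := by
    rw [irreducible_iff_roots_eq_zero_of_degree_le_three hdeg2.ge (by rw [hdeg2]; norm_num)]
    refine Multiset.eq_zero_of_forall_notMem fun r hr => ?_
    rw [mem_roots hmono.ne_zero] at hr
    have h10 := hr
    simp only [IsRoot, eval_add, eval_pow, eval_X, eval_one] at h10
    nlinarith [sq_nonneg r]
  have hprime : Prime ((X : ℝ[X]) ^ 2 + 1) := hirr.prime
  have hint : IsIntegral ℝ (Ms + Mn) := (Ms + Mn).isIntegral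
  have haev : aeval (Ms + Mn) (((X : ℝ[X]) ^ 2 + 1) ^ (n / 2)) = 0 := by
    rw [map_pow, show aeval (Ms + Mn) ((X : ℝ[X]) ^ 2 + 1) = (Ms + Mn) ^ 2 + 1 by simp, huN]
  obtain ⟨i, hiN, hass⟩ := (dvd_prime_pow hprime (n / 2)).mp (minpoly.dvd ℝ (Ms + Mn) haev)
  have hmp : minpoly ℝ (Ms + Mn) = ((X : ℝ[X]) ^ 2 + 1) ^ i :=
    eq_of_monic_of_associated (minpoly.monic hint) (hmono.pow _) hass
  have hui : ((Ms + Mn) ^ 2 + 1) ^ i = 0 := by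
    have h5 := minpoly.aeval ℝ (Ms + Mn)
    rw [hmp, map_pow, show aeval (Ms + Mn) ((X : ℝ[X]) ^ 2 + 1) = (Ms + Mn) ^ 2 + 1 by simp]
      at h5
    exact h5
  have hieq : i = n / 2 := by
    by_contra hne
    apply huNpred
    rw [show n / 2 - 1 = i + (n / 2 - 1 - i) by omega, pow_add, hui, zero_mul]
  have hchar : (Ms + Mn).charpoly = ((X : ℝ[X]) ^ 2 + 1) ^ (n / 2) := by
    have hdvd2 : ((X : ℝ[X]) ^ 2 + 1) ^ (n / 2) ∣ (Ms + Mn).charpoly := by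
      rw [← hieq, ← hmp]; exact (Ms + Mn).minpoly_dvd_charpoly
    refine eq_of_monic_of_dvd_of_natDegree_le (hmono.pow _) ((Ms + Mn).charpoly_monic)
      hdvd2 ?_
    rw [Matrix.charpoly_natDegree_eq_dim, natDegree_pow, hdeg2, Fintype.card_fin]
    have h11 := Nat.even_iff.mp hev
    omega
  have hminp : minpoly ℝ (Ms + Mn) = (Ms + Mn).charpoly := by
    rw [hmp, hieq, hchar]
  have hsemi : Module.End.IsSemisimple (Matrix.mulVecLin Ms) := by
    apply Module.End.isSemisimple_of_squarefree_aeval_eq_zero hirr.squarefree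
    rw [_root_.map_add, _root_.map_one, _root_.map_pow, aeval_X]
    have h1 : (Matrix.mulVecLin Ms) ^ 2 = Matrix.mulVecLin (Ms * Ms) := by
      rw [pow_two, Module.End.mul_eq_comp, ← Matrix.mulVecLin_mul]
    rw [h1, hMsMs]
    ext w x
    by_cases hxw : x = w <;>
      simp [Matrix.mulVecLin_apply, Matrix.neg_mulVec, Matrix.one_mulVec, Matrix.neg_apply,
        Matrix.one_apply, Pi.single_apply, hxw]
  exact ⟨hcomm, hsq, hnp, hsemi, hMnNil, hMs_mem, hMn_mem, hadj, hchar, hminp⟩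

end Stmt18Aux

/-- for even n ≥ 4, the matrices M_s and M_n commute,
M_s² = −I, M_n^{n/2} = 0, they are the semisimple and nilpotent parts of
M₀₁ = M_s + M_n, both are polynomials in M₀₁ (so ℝ[M₀₁] = ℝ[M_s, M_n]), and
M₀₁ is nonderogatory with characteristic polynomial (X²+1)^{n/2}. -/


theorem stmt18 {n : ℕ} (hn : 4 ≤ n) (hev : Even n)
    (Ms Mn : Matrix (Fin n) (Fin n) ℝ)
    (hMs : Ms = Matrix.of (fun i j : Fin n =>
      if (j : ℕ) = (i : ℕ) + 1 ∧ Even (i : ℕ) then (-1 : ℝ)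
      else if (i : ℕ) = (j : ℕ) + 1 ∧ Even (j : ℕ) then 1 else 0))
    (hMn : Mn = Matrix.of (fun i j : Fin n =>
      if (j : ℕ) = (i : ℕ) + 2 then (1 : ℝ) else 0)) :
    Ms * Mn = Mn * Ms ∧
    Ms ^ 2 = -1 ∧
    Mn ^ (n / 2) = 0 ∧
    Module.End.IsSemisimple (Matrix.mulVecLin Ms) ∧
    IsNilpotent Mn ∧
    Ms ∈ Algebra.adjoin ℝ ({Ms + Mn} : Set (Matrix (Fin n) (Fin n) ℝ)) ∧
    Mn ∈ Algebra.adjoin ℝ ({Ms + Mn} : Set (Matrix (Fin n) (Fin n) ℝ)) ∧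
    Algebra.adjoin ℝ ({Ms + Mn} : Set (Matrix (Fin n) (Fin n) ℝ))
      = Algebra.adjoin ℝ ({Ms, Mn} : Set (Matrix (Fin n) (Fin n) ℝ)) ∧
    (Ms + Mn).charpoly = (X ^ 2 + 1) ^ (n / 2) ∧
    minpoly ℝ (Ms + Mn) = (Ms + Mn).charpoly := by
  exact Stmt18Aux.stmt18 hn hev Ms Mn hMs hMn
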